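/- Suppose 1 ≤ k ≤ n and X is an n×n density matrix with eigenvalues x_1 ≥ ... ≥ x_n ≥ 0. Then the trace-norm distance from X to the set of density matrices of rank at most k equals 2·∑_{j=k+1}^n x_j. -/

import Mathlib

open Matrix BigOperators Finset
open scoped ComplexOrder

/-- The singular values of a square complex matrix. -/
noncomputable def singVals {n : ℕ} (A : Matrix (Fin n) (Fin n) ℂ) : Fin n → ℝ :=
  fun i => Real.sqrt ((Matrix.isHermitian_conjTranspose_mul_self A).eigenvalues i)

/-- The trace norm: the sum of singular values. -/
noncomputable def traceNorm {n : ℕ} (A : Matrix (Fin n) (Fin n) ℂ) : ℝ :=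
  ∑ i, singVals A i

/-- A density matrix: positive semidefinite with trace 1. -/
def IsDensity {n : ℕ} (X : Matrix (Fin n) (Fin n) ℂ) : Prop :=
  X.PosSemidef ∧ X.trace = 1

/-- Distance from `X` to the set of density matrices of rank at most `k`,
measured via a given norm `N`. -/
noncomputable def distToLowRank {n : ℕ} (N : Matrix (Fin n) (Fin n) ℂ → ℝ) (k : ℕ)
    (X : Matrix (Fin n) (Fin n) ℂ) : ℝ :=
  sInf {t | ∃ Y : Matrix (Fin n) (Fin n) ℂ, IsDensity Y ∧ Y.rank ≤ k ∧ t = N (X - Y)}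

namespace Aux
open Polynomial

variable {n : ℕ}

lemma charpoly_diagonal (d : Fin n → ℂ) :
    (Matrix.diagonal d).charpoly = ∏ i, (X - C (d i)) := by
  have h : charmatrix (Matrix.diagonal d) = Matrix.diagonal (fun i => (X : ℂ[X]) - C (d i)) := by
    ext i j
    by_cases hij : i = j
    · subst hij; simp [charmatrix_apply_eq]
    · rw [charmatrix_apply_ne _ _ _ hij, Matrix.diagonal_apply_ne _ hij,
        Matrix.diagonal_apply_ne _ hij]
      simp
  rw [Matrix.charpoly, h, Matrix.det_diagonal]

lemma charpoly_conj (U D : Matrix (Fin n) (Fin n) ℂ)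
    (hU : U ∈ Matrix.unitaryGroup (Fin n) ℂ) :
    (U * D * Uᴴ).charpoly = D.charpoly := by
  have h2 : U * Uᴴ = 1 := by
    simpa [Matrix.star_eq_conjTranspose] using hU.2
  have hmap : (U.map C) * (Uᴴ.map C) = 1 := by
    rw [← Matrix.map_mul, h2, Matrix.map_one C (map_zero C) (map_one C)]
  have key : charmatrix (U * D * Uᴴ) = (U.map C) * charmatrix D * (Uᴴ.map C) := by
    show Matrix.scalar (Fin n) (X : ℂ[X]) - C.mapMatrix (U * D * Uᴴ)
      = (U.map C) * (Matrix.scalar (Fin n) (X : ℂ[X]) - C.mapMatrix D) * (Uᴴ.map C)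
    rw [mul_sub, sub_mul]
    congr 1
    · rw [← (Matrix.scalar_commute (X : ℂ[X]) (fun r => (Commute.all _ _)) (U.map C)).eq,
        mul_assoc, hmap, mul_one]
    · simp only [RingHom.mapMatrix_apply, ← Matrix.map_mul]
  rw [Matrix.charpoly, Matrix.charpoly, key, Matrix.det_mul, Matrix.det_mul]
  have : (U.map C).det * (Uᴴ.map C).det = 1 := by
    rw [← Matrix.det_mul, hmap, Matrix.det_one]
  calc (U.map C).det * (charmatrix D).det * (Uᴴ.map C).det
      = (charmatrix D).det * ((U.map C).det * (Uᴴ.map C).det) := by ring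
    _ = (charmatrix D).det := by rw [this, mul_one]

lemma eig_multiset (U : Matrix (Fin n) (Fin n) ℂ) (hU : U ∈ Matrix.unitaryGroup (Fin n) ℂ)
    (c : Fin n → ℝ)
    (hB : (U * Matrix.diagonal (fun i => (c i : ℂ)) * Uᴴ).IsHermitian) :
    Multiset.map (fun i => ((hB.eigenvalues i : ℂ))) Finset.univ.val
      = Multiset.map (fun i => ((c i : ℂ))) Finset.univ.val := by
  set B := U * Matrix.diagonal (fun i => (c i : ℂ)) * Uᴴ with hBdef
  have h1 : B.charpoly = ∏ i, (X - C ((hB.eigenvalues i : ℂ))) := by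
    conv_lhs => rw [hB.spectral_theorem]
    rw [Unitary.conjStarAlgAut_apply, Matrix.star_eq_conjTranspose,
      Aux.charpoly_conj _ _ (hB.eigenvectorUnitary).2, Aux.charpoly_diagonal]
    rfl
  have h2 : B.charpoly = ∏ i, (X - C ((c i : ℂ))) := by
    rw [hBdef, Aux.charpoly_conj _ _ hU, Aux.charpoly_diagonal]
  have hr := congrArg Polynomial.roots (h1.symm.trans h2)
  rwa [Finset.prod_eq_multiset_prod, Finset.prod_eq_multiset_prod,
    show (Multiset.map (fun i => (X : ℂ[X]) - C ((hB.eigenvalues i : ℂ))) Finset.univ.val)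
      = Multiset.map (fun a => (X : ℂ[X]) - C a)
          (Multiset.map (fun i => ((hB.eigenvalues i : ℂ))) Finset.univ.val) by
      rw [Multiset.map_map]; rfl,
    show (Multiset.map (fun i => (X : ℂ[X]) - C ((c i : ℂ))) Finset.univ.val)
      = Multiset.map (fun a => (X : ℂ[X]) - C a)
          (Multiset.map (fun i => ((c i : ℂ))) Finset.univ.val) by
      rw [Multiset.map_map]; rfl,
    Polynomial.roots_multiset_prod_X_sub_C, Polynomial.roots_multiset_prod_X_sub_C] at hr

lemma sum_fn_eigs (U : Matrix (Fin n) (Fin n) ℂ) (hU : U ∈ Matrix.unitaryGroup (Fin n) ℂ)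
    (c : Fin n → ℝ)
    (hB : (U * Matrix.diagonal (fun i => (c i : ℂ)) * Uᴴ).IsHermitian) (g : ℂ → ℝ) :
    ∑ i, g ((hB.eigenvalues i : ℂ)) = ∑ i, g ((c i : ℂ)) := by
  have h := congrArg (fun m => (Multiset.map g m).sum) (eig_multiset U hU c hB)
  rw [Multiset.map_map, Multiset.map_map] at h
  exact h

lemma traceNorm_conj_diag (U : Matrix (Fin n) (Fin n) ℂ)
    (hU : U ∈ Matrix.unitaryGroup (Fin n) ℂ) (d : Fin n → ℝ) :
    traceNorm (U * Matrix.diagonal (fun i => (d i : ℂ)) * Uᴴ) = ∑ i, |d i| := by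
  have h1 : Uᴴ * U = 1 := by simpa [Matrix.star_eq_conjTranspose] using hU.1
  set A := U * Matrix.diagonal (fun i => (d i : ℂ)) * Uᴴ with hAdef
  have hAH : Aᴴ = A := by
    rw [hAdef, Matrix.conjTranspose_mul, Matrix.conjTranspose_mul,
      Matrix.conjTranspose_conjTranspose, Matrix.diagonal_conjTranspose]
    have : (star fun i => ((d i : ℂ))) = fun i => ((d i : ℂ)) := by
      funext i; simp
    rw [this, mul_assoc]
  have hAA : Aᴴ * A = U * Matrix.diagonal (fun i => ((d i ^ 2 : ℝ) : ℂ)) * Uᴴ := by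
    rw [hAH, hAdef]
    calc (U * Matrix.diagonal (fun i => (d i : ℂ)) * Uᴴ)
        * (U * Matrix.diagonal (fun i => (d i : ℂ)) * Uᴴ)
        = U * (Matrix.diagonal (fun i => (d i : ℂ)) * (Uᴴ * U)
            * Matrix.diagonal (fun i => (d i : ℂ))) * Uᴴ := by
          simp only [mul_assoc]
      _ = U * Matrix.diagonal (fun i => ((d i ^ 2 : ℝ) : ℂ)) * Uᴴ := by
          rw [h1, mul_one, Matrix.diagonal_mul_diagonal]
          congr 1
          congr 1
          funext i
          push_cast
          ring
  have key : ∀ (M : Matrix (Fin n) (Fin n) ℂ) (hM : M.IsHermitian),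
      M = U * Matrix.diagonal (fun i => ((d i ^ 2 : ℝ) : ℂ)) * Uᴴ →
      ∑ i, Real.sqrt (hM.eigenvalues i) = ∑ i, |d i| := by
    intro M hM h
    subst h
    have := Aux.sum_fn_eigs U hU (fun i => d i ^ 2) hM (fun z => Real.sqrt z.re)
    simpa [← Complex.ofReal_pow, Real.sqrt_sq_eq_abs] using this
  unfold traceNorm singVals
  exact key _ _ hAA


lemma trace_conj (U M : Matrix (Fin n) (Fin n) ℂ)
    (hU : U ∈ Matrix.unitaryGroup (Fin n) ℂ) :
    (U * M * Uᴴ).trace = M.trace := by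
  have h1 : Uᴴ * U = 1 := by simpa [Matrix.star_eq_conjTranspose] using hU.1
  rw [Matrix.trace_mul_cycle, h1, one_mul]

lemma mul_conj_mul (U D E : Matrix (Fin n) (Fin n) ℂ)
    (hU : U ∈ Matrix.unitaryGroup (Fin n) ℂ) :
    (U * D * Uᴴ) * (U * E * Uᴴ) = U * (D * E) * Uᴴ := by
  have h1 : Uᴴ * U = 1 := by simpa [Matrix.star_eq_conjTranspose] using hU.1
  calc (U * D * Uᴴ) * (U * E * Uᴴ) = U * (D * ((Uᴴ * U) * E)) * Uᴴ := by
        simp only [mul_assoc]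
    _ = U * (D * E) * Uᴴ := by rw [h1, one_mul]

lemma conj_sub (U D E : Matrix (Fin n) (Fin n) ℂ) :
    (U * D * Uᴴ) - (U * E * Uᴴ) = U * (D - E) * Uᴴ := by
  rw [Matrix.mul_sub, Matrix.sub_mul]

lemma spectral (A : Matrix (Fin n) (Fin n) ℂ) (hA : A.IsHermitian) :
    A = (hA.eigenvectorUnitary : Matrix (Fin n) (Fin n) ℂ)
        * Matrix.diagonal (fun i => (hA.eigenvalues i : ℂ))
        * (hA.eigenvectorUnitary : Matrix (Fin n) (Fin n) ℂ)ᴴ := by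
  conv_lhs => rw [hA.spectral_theorem]
  rw [Unitary.conjStarAlgAut_apply, Matrix.star_eq_conjTranspose]
  rfl

lemma conj_entry (P : Matrix (Fin n) (Fin n) ℂ) (e : Fin n → ℝ) (i : Fin n) :
    (Pᴴ * Matrix.diagonal (fun j => (e j : ℂ)) * P) i i
      = ((∑ j, e j * Complex.normSq (P j i) : ℝ) : ℂ) := by
  rw [Matrix.mul_apply]
  push_cast
  refine Finset.sum_congr rfl fun j _ => ?_
  rw [Matrix.mul_diagonal, Matrix.conjTranspose_apply]
  have hz : star (P j i) * P j i = ((Complex.normSq (P j i) : ℝ) : ℂ) := by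
    rw [show star (P j i) = (starRingEnd ℂ) (P j i) from rfl, Complex.conj_mul']
    norm_cast
    rw [Complex.normSq_eq_norm_sq]
  rw [show star (P j i) * (e j : ℂ) * P j i
      = (e j : ℂ) * (star (P j i) * P j i) by ring, hz]

lemma col_norm (P : Matrix (Fin n) (Fin n) ℂ)
    (hP : Pᴴ * P = 1) (i : Fin n) :
    ∑ j, Complex.normSq (P j i) = 1 := by
  have h := congrArg (fun M => M i i) hP
  simp only [Matrix.mul_apply, Matrix.one_apply_eq, Matrix.conjTranspose_apply] at h
  have : ((∑ j, Complex.normSq (P j i) : ℝ) : ℂ) = 1 := by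
    push_cast
    rw [← h]
    refine Finset.sum_congr rfl fun j _ => ?_
    rw [show star (P j i) = (starRingEnd ℂ) (P j i) from rfl, Complex.conj_mul']
    norm_cast
    rw [Complex.normSq_eq_norm_sq]
  exact_mod_cast this

lemma trace_diag_mul (e : Fin n → ℂ) (M : Matrix (Fin n) (Fin n) ℂ) :
    (Matrix.diagonal e * M).trace = ∑ i, e i * M i i := by
  simp [Matrix.trace, Matrix.diag, Matrix.diagonal_mul]

lemma trace_mul_diag (M : Matrix (Fin n) (Fin n) ℂ) (e : Fin n → ℂ) :
    (M * Matrix.diagonal e).trace = ∑ i, M i i * e i := by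
  simp [Matrix.trace, Matrix.diag, Matrix.mul_diagonal]

lemma card_filter_lt {k : ℕ} (hkn : k ≤ n) :
    (Finset.univ.filter fun i : Fin n => (i : ℕ) < k).card = k := by
  have : (Finset.univ.filter fun i : Fin n => (i : ℕ) < k)
      = Finset.map (Fin.castLEEmb hkn) Finset.univ := by
    ext i
    simp only [Finset.mem_filter, Finset.mem_univ, true_and, Finset.mem_map,
      Fin.castLEEmb_apply]
    constructor
    · intro hi
      exact ⟨⟨(i : ℕ), hi⟩, by ext; simp⟩
    · rintro ⟨j, rfl⟩
      simpa using j.2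
  rw [this, Finset.card_map, Finset.card_univ, Fintype.card_fin]

lemma kyfan {k : ℕ} (hkn : k ≤ n) (x q : Fin n → ℝ)
    (hxsort : ∀ i j : Fin n, i ≤ j → x j ≤ x i) (hxnn : ∀ i, 0 ≤ x i)
    (hq0 : ∀ i, 0 ≤ q i) (hq1 : ∀ i, q i ≤ 1) (hqs : ∑ i, q i ≤ (k : ℝ)) :
    ∑ i, x i * q i ≤ ∑ i ∈ Finset.univ.filter (fun i : Fin n => (i : ℕ) < k), x i := by
  classical
  set F := Finset.univ.filter (fun i : Fin n => (i : ℕ) < k) with hF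
  set F' := Finset.univ.filter (fun i : Fin n => ¬ (i : ℕ) < k) with hF'
  set t : ℝ := if h : k < n then x ⟨k, h⟩ else 0 with ht
  have ht0 : 0 ≤ t := by
    rw [ht]; split
    · exact hxnn _
    · exact le_refl 0
  have hcard : (F.card : ℝ) = k := by rw [hF, card_filter_lt hkn]
  have htle : ∀ i ∈ F, t ≤ x i := by
    intro i hi
    rw [hF, Finset.mem_filter] at hi
    rw [ht]
    split
    next h => exact hxsort i ⟨k, h⟩ (by simpa [Fin.le_def] using le_of_lt hi.2)
    next => exact hxnn i
  have htge : ∀ i ∈ F', x i ≤ t := by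
    intro i hi
    rw [hF', Finset.mem_filter] at hi
    have hik : k ≤ (i : ℕ) := not_lt.mp hi.2
    have hkn' : k < n := lt_of_le_of_lt hik i.2
    rw [ht, dif_pos hkn']
    exact hxsort ⟨k, hkn'⟩ i (by simpa [Fin.le_def] using hik)
  have split_q : ∑ i ∈ F, q i + ∑ i ∈ F', q i = ∑ i, q i :=
    Finset.sum_filter_add_sum_filter_not _ _ _
  have split_xq : (∑ i ∈ F, x i * q i) + ∑ i ∈ F', x i * q i = ∑ i, x i * q i :=
    Finset.sum_filter_add_sum_filter_not _ _ _
  have b1 : ∑ i ∈ F, x i * (q i - 1) ≤ ∑ i ∈ F, t * (q i - 1) :=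
    Finset.sum_le_sum fun i hi =>
      mul_le_mul_of_nonpos_right (htle i hi) (by linarith [hq1 i])
  have b2 : ∑ i ∈ F', x i * q i ≤ ∑ i ∈ F', t * q i :=
    Finset.sum_le_sum fun i hi => mul_le_mul_of_nonneg_right (htge i hi) (hq0 i)
  have e1 : ∑ i ∈ F, x i * (q i - 1) = (∑ i ∈ F, x i * q i) - ∑ i ∈ F, x i := by
    rw [← Finset.sum_sub_distrib]
    exact Finset.sum_congr rfl fun i _ => by ring
  have e2 : ∑ i ∈ F, t * (q i - 1) = t * (∑ i ∈ F, q i) - t * F.card := by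
    rw [Finset.mul_sum,
      show t * (F.card : ℝ) = ∑ _i ∈ F, t by rw [Finset.sum_const, nsmul_eq_mul, mul_comm],
      ← Finset.sum_sub_distrib]
    exact Finset.sum_congr rfl fun i _ => by ring
  have e3 : ∑ i ∈ F', t * q i = t * ∑ i ∈ F', q i := (Finset.mul_sum _ _ _).symm
  have e4 : t * (∑ i ∈ F, q i) + t * (∑ i ∈ F', q i) = t * ∑ i, q i := by
    rw [← mul_add, split_q]
  have e5 : t * (∑ i, q i) - t * k ≤ 0 := by
    have := mul_nonpos_of_nonneg_of_nonpos ht0 (show (∑ i, q i) - k ≤ 0 by linarith)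
    nlinarith
  have e6 : t * (F.card : ℝ) = t * k := by rw [hcard]
  linarith


lemma posSemidef_conj_diag (U : Matrix (Fin n) (Fin n) ℂ)
    (c : Fin n → ℝ) (hc : ∀ i, 0 ≤ c i) :
    (U * Matrix.diagonal (fun i => (c i : ℂ)) * Uᴴ).PosSemidef := by
  have hd : (Matrix.diagonal (fun i => (c i : ℂ))).PosSemidef :=
    Matrix.posSemidef_diagonal_iff.mpr fun i => by
      exact_mod_cast (hc i)
  exact hd.mul_mul_conjTranspose_same U

lemma rank_conj (U D : Matrix (Fin n) (Fin n) ℂ)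
    (hU : U ∈ Matrix.unitaryGroup (Fin n) ℂ) :
    (U * D * Uᴴ).rank = D.rank := by
  have h1 : Uᴴ * U = 1 := by simpa [Matrix.star_eq_conjTranspose] using hU.1
  have h2 : U * Uᴴ = 1 := by simpa [Matrix.star_eq_conjTranspose] using hU.2
  have hdU : IsUnit U.det := by
    apply IsUnit.of_mul_eq_one (Uᴴ.det)
    rw [← Matrix.det_mul, h2, Matrix.det_one]
  have hdU' : IsUnit (Uᴴ).det := by
    apply IsUnit.of_mul_eq_one (U.det)
    rw [← Matrix.det_mul, h1, Matrix.det_one]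
  rw [mul_assoc, Matrix.rank_mul_eq_right_of_isUnit_det U _ hdU,
    Matrix.rank_mul_eq_left_of_isUnit_det Uᴴ D hdU']

lemma conj_conj_entry (W C : Matrix (Fin n) (Fin n) ℂ) (e : Fin n → ℝ) (i : Fin n) :
    (Cᴴ * (W * Matrix.diagonal (fun j => (e j : ℂ)) * Wᴴ) * C) i i
      = ((∑ j, e j * Complex.normSq ((Wᴴ * C) j i) : ℝ) : ℂ) := by
  have h : Cᴴ * (W * Matrix.diagonal (fun j => (e j : ℂ)) * Wᴴ) * C
      = (Wᴴ * C)ᴴ * Matrix.diagonal (fun j => (e j : ℂ)) * (Wᴴ * C) := by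
    rw [Matrix.conjTranspose_mul, Matrix.conjTranspose_conjTranspose]
    simp only [Matrix.mul_assoc]
  rw [h, conj_entry]

lemma lower_bound {k : ℕ} (hkn : k ≤ n)
    (x : Fin n → ℝ) (hxsort : ∀ i j : Fin n, i ≤ j → x j ≤ x i) (hxnn : ∀ i, 0 ≤ x i)
    (U : Matrix (Fin n) (Fin n) ℂ) (hU : U ∈ Matrix.unitaryGroup (Fin n) ℂ)
    (X : Matrix (Fin n) (Fin n) ℂ) (hX : IsDensity X)
    (hXU : X = U * Matrix.diagonal (fun i => (x i : ℂ)) * Uᴴ)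
    (Y : Matrix (Fin n) (Fin n) ℂ) (hY : IsDensity Y) (hYr : Y.rank ≤ k) :
    2 * ∑ j ∈ Finset.univ.filter (fun j : Fin n => k ≤ (j : ℕ)), x j ≤ traceNorm (X - Y) := by
  classical
  have hU1 : Uᴴ * U = 1 := by simpa [Matrix.star_eq_conjTranspose] using hU.1
  have hU2 : U * Uᴴ = 1 := by simpa [Matrix.star_eq_conjTranspose] using hU.2
  set s := ∑ j ∈ Finset.univ.filter (fun j : Fin n => k ≤ (j : ℕ)), x j with hs
  -- the x's sum to 1
  have hsum1 : ∑ i, x i = 1 := by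
    have h := hX.2
    rw [hXU, trace_conj _ _ hU, Matrix.trace_diagonal] at h
    exact_mod_cast h
  have hks : ∑ j ∈ Finset.univ.filter (fun j : Fin n => ((j : ℕ) < k)), x j = 1 - s := by
    have h := Finset.sum_filter_add_sum_filter_not Finset.univ
      (fun j : Fin n => ((j : ℕ) < k)) x
    have h2 : Finset.univ.filter (fun j : Fin n => ¬ ((j : ℕ) < k))
        = Finset.univ.filter (fun j : Fin n => k ≤ (j : ℕ)) := by
      simp [not_lt]
    rw [h2, hsum1, ← hs] at h
    linarith
  -- spectral data of Y
  have hYh : Y.IsHermitian := hY.1.1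
  set W : Matrix (Fin n) (Fin n) ℂ := (hYh.eigenvectorUnitary : Matrix (Fin n) (Fin n) ℂ)
    with hWdef
  have hW : W ∈ Matrix.unitaryGroup (Fin n) ℂ := (hYh.eigenvectorUnitary).2
  have hW1 : Wᴴ * W = 1 := by simpa [Matrix.star_eq_conjTranspose] using hW.1
  have hW2 : W * Wᴴ = 1 := by simpa [Matrix.star_eq_conjTranspose] using hW.2
  set ν := hYh.eigenvalues with hνdef
  have hν0 : ∀ i, 0 ≤ ν i := fun i => hY.1.eigenvalues_nonneg i
  have hYspec : Y = W * Matrix.diagonal (fun i => (ν i : ℂ)) * Wᴴ := spectral Y hYh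
  set e : Fin n → ℝ := fun i => if ν i = 0 then 0 else 1 with hedef
  have he0 : ∀ i, 0 ≤ e i := fun i => by rw [hedef]; dsimp only; split <;> norm_num
  have he1 : ∀ i, e i ≤ 1 := fun i => by rw [hedef]; dsimp only; split <;> norm_num
  have heν : ∀ i, e i * ν i = ν i := fun i => by
    rw [hedef]; dsimp only; by_cases h : ν i = 0 <;> simp [h]
  have hek : ∑ i, e i ≤ (k : ℝ) := by
    have hcardnat : Y.rank = (Finset.univ.filter fun i => ν i ≠ 0).card := by
      rw [hYh.rank_eq_card_non_zero_eigs, Fintype.card_subtype]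
    have hsum : ∑ i, e i = ((Finset.univ.filter fun i => ν i ≠ 0).card : ℝ) := by
      rw [Finset.card_filter]
      push_cast
      refine Finset.sum_congr rfl fun i _ => ?_
      by_cases h : ν i = 0 <;> simp [hedef, h]
    rw [hsum]
    have : Y.rank ≤ k := hYr
    rw [hcardnat] at this
    exact_mod_cast this
  -- spectral data of A = X - Y
  have hA : (X - Y).IsHermitian := hX.1.1.sub hY.1.1
  set V : Matrix (Fin n) (Fin n) ℂ := (hA.eigenvectorUnitary : Matrix (Fin n) (Fin n) ℂ)
    with hVdef
  have hV : V ∈ Matrix.unitaryGroup (Fin n) ℂ := (hA.eigenvectorUnitary).2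
  have hV1 : Vᴴ * V = 1 := by simpa [Matrix.star_eq_conjTranspose] using hV.1
  have hV2 : V * Vᴴ = 1 := by simpa [Matrix.star_eq_conjTranspose] using hV.2
  set μ := hA.eigenvalues with hμdef
  have hAspec : X - Y = V * Matrix.diagonal (fun i => (μ i : ℂ)) * Vᴴ := spectral _ hA
  have htn : traceNorm (X - Y) = ∑ i, |μ i| := by
    calc traceNorm (X - Y) = traceNorm (V * Matrix.diagonal (fun i => (μ i : ℂ)) * Vᴴ) := by
          rw [← hAspec]
      _ = ∑ i, |μ i| := traceNorm_conj_diag V hV μ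
  have hμ0 : ∑ i, μ i = 0 := by
    have h1 : (X - Y).trace = 0 := by
      rw [Matrix.trace_sub, hX.2, hY.2, sub_self]
    rw [hAspec, trace_conj _ _ hV, Matrix.trace_diagonal] at h1
    exact_mod_cast h1
  -- the doubly-stochastic matrix m
  set P : Matrix (Fin n) (Fin n) ℂ := Wᴴ * U with hPdef
  have hPt : Pᴴ = Uᴴ * W := by
    rw [hPdef, Matrix.conjTranspose_mul, Matrix.conjTranspose_conjTranspose]
  have hP1 : Pᴴ * P = 1 := by
    rw [hPt, hPdef]
    calc Uᴴ * W * (Wᴴ * U) = Uᴴ * (W * Wᴴ) * U := by simp only [Matrix.mul_assoc]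
      _ = 1 := by rw [hW2, mul_one, hU1]
  have hP2 : P * Pᴴ = 1 := by
    rw [hPt, hPdef]
    calc Wᴴ * U * (Uᴴ * W) = Wᴴ * (U * Uᴴ) * W := by simp only [Matrix.mul_assoc]
      _ = 1 := by rw [hU2, mul_one, hW1]
  set m : Fin n → Fin n → ℝ := fun i j => Complex.normSq (P i j) with hmdef
  have hm0 : ∀ i j, 0 ≤ m i j := fun i j => Complex.normSq_nonneg _
  have hcol : ∀ j, ∑ i, m i j = 1 := fun j => col_norm P hP1 j
  have hrow : ∀ i, ∑ j, m i j = 1 := by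
    intro i
    have h := col_norm Pᴴ (by rw [Matrix.conjTranspose_conjTranspose]; exact hP2) i
    simpa [Matrix.conjTranspose_apply, Complex.normSq_conj, hmdef] using h
  set q : Fin n → ℝ := fun j => ∑ i, e i * m i j with hqdef
  have hq0 : ∀ j, 0 ≤ q j := fun j =>
    Finset.sum_nonneg fun i _ => mul_nonneg (he0 i) (hm0 i j)
  have hq1 : ∀ j, q j ≤ 1 := fun j => by
    calc q j ≤ ∑ i, m i j :=
          Finset.sum_le_sum fun i _ => mul_le_of_le_one_left (hm0 i j) (he1 i)
      _ = 1 := hcol j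
  have hqs : ∑ j, q j ≤ (k : ℝ) := by
    have : ∑ j, q j = ∑ i, e i := by
      rw [hqdef]
      dsimp only
      rw [Finset.sum_comm]
      refine Finset.sum_congr rfl fun i _ => ?_
      rw [← Finset.mul_sum, hrow i, mul_one]
    rw [this]; exact hek
  -- the projection Q
  set Q : Matrix (Fin n) (Fin n) ℂ := W * Matrix.diagonal (fun i => (e i : ℂ)) * Wᴴ with hQdef
  -- trace of Q * X
  have htrQX : (Q * X).trace = ((∑ j, x j * q j : ℝ) : ℂ) := by
    have hWXW : Wᴴ * X * W = P * Matrix.diagonal (fun i => (x i : ℂ)) * Pᴴ := by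
      rw [hXU, hPdef, hPt]
      simp only [Matrix.mul_assoc]
    have hstep : Q * X = (W * Matrix.diagonal (fun i => (e i : ℂ))) * (Wᴴ * X) := by
      rw [hQdef]; simp only [Matrix.mul_assoc]
    rw [hstep, Matrix.trace_mul_comm]
    have hstep2 : Wᴴ * X * (W * Matrix.diagonal (fun i => (e i : ℂ)))
        = (Wᴴ * X * W) * Matrix.diagonal (fun i => (e i : ℂ)) := by
      simp only [Matrix.mul_assoc]
    rw [hstep2, Matrix.trace_mul_comm, hWXW, trace_diag_mul]
    have hentry : ∀ i, (P * Matrix.diagonal (fun j => (x j : ℂ)) * Pᴴ) i i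
        = ((∑ j, x j * m i j : ℝ) : ℂ) := by
      intro i
      have h := conj_entry Pᴴ x i
      rw [Matrix.conjTranspose_conjTranspose] at h
      rw [h]
      congr 1
      refine Finset.sum_congr rfl fun j _ => ?_
      rw [hmdef]
      simp [Matrix.conjTranspose_apply, Complex.normSq_conj]
    calc ∑ i, (e i : ℂ) * (P * Matrix.diagonal (fun j => (x j : ℂ)) * Pᴴ) i i
        = ∑ i, (e i : ℂ) * ((∑ j, x j * m i j : ℝ) : ℂ) := by
          exact Finset.sum_congr rfl fun i _ => by rw [hentry i]
      _ = ((∑ i, e i * ∑ j, x j * m i j : ℝ) : ℂ) := by push_cast; ring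
      _ = ((∑ j, x j * q j : ℝ) : ℂ) := by
          congr 1
          calc ∑ i, e i * ∑ j, x j * m i j = ∑ i, ∑ j, e i * (x j * m i j) := by
                exact Finset.sum_congr rfl fun i _ => Finset.mul_sum _ _ _
            _ = ∑ j, ∑ i, e i * (x j * m i j) := Finset.sum_comm
            _ = ∑ j, x j * q j := by
                refine Finset.sum_congr rfl fun j _ => ?_
                rw [hqdef]
                dsimp only
                rw [Finset.mul_sum]
                exact Finset.sum_congr rfl fun i _ => by ring
  -- trace of Q * Y
  have htrQY : (Q * Y).trace = 1 := by
    have hQY : Q * Y = Y := by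
      rw [hQdef]
      conv_lhs => rw [hYspec]
      rw [mul_conj_mul _ _ _ hW, Matrix.diagonal_mul_diagonal]
      rw [show (fun i => (e i : ℂ) * (ν i : ℂ)) = fun i => (ν i : ℂ) by
        funext i
        rw [show (e i : ℂ) * (ν i : ℂ) = ((e i * ν i : ℝ) : ℂ) by push_cast; ring, heν i]]
      exact hYspec.symm
    rw [hQY, hY.2]
  -- diagonal entries of Vᴴ Q V
  set r : Fin n → ℝ := fun i => ∑ j, e j * Complex.normSq ((Wᴴ * V) j i) with hrdef
  have hr0 : ∀ i, 0 ≤ r i := fun i =>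
    Finset.sum_nonneg fun j _ => mul_nonneg (he0 j) (Complex.normSq_nonneg _)
  have hWV1 : (Wᴴ * V)ᴴ * (Wᴴ * V) = 1 := by
    rw [Matrix.conjTranspose_mul, Matrix.conjTranspose_conjTranspose]
    calc Vᴴ * W * (Wᴴ * V) = Vᴴ * (W * Wᴴ) * V := by simp only [Matrix.mul_assoc]
      _ = 1 := by rw [hW2, mul_one, hV1]
  have hr1 : ∀ i, r i ≤ 1 := fun i => by
    calc r i ≤ ∑ j, Complex.normSq ((Wᴴ * V) j i) :=
          Finset.sum_le_sum fun j _ =>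
            mul_le_of_le_one_left (Complex.normSq_nonneg _) (he1 j)
      _ = 1 := col_norm _ hWV1 i
  have hQV : ∀ i, (Vᴴ * Q * V) i i = ((r i : ℝ) : ℂ) := fun i => by
    rw [hQdef, conj_conj_entry]
  -- trace of Q * (X - Y)
  have htrQA : (Q * (X - Y)).trace = ((∑ i, r i * μ i : ℝ) : ℂ) := by
    conv_lhs => rw [hAspec]
    have hstep : Q * (V * Matrix.diagonal (fun i => (μ i : ℂ)) * Vᴴ)
        = (Q * V * Matrix.diagonal (fun i => (μ i : ℂ))) * Vᴴ := by
      simp only [Matrix.mul_assoc]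
    rw [hstep, Matrix.trace_mul_comm]
    have hstep2 : Vᴴ * (Q * V * Matrix.diagonal (fun i => (μ i : ℂ)))
        = (Vᴴ * Q * V) * Matrix.diagonal (fun i => (μ i : ℂ)) := by
      simp only [Matrix.mul_assoc]
    rw [hstep2, trace_mul_diag]
    calc ∑ i, (Vᴴ * Q * V) i i * (μ i : ℂ)
        = ∑ i, ((r i : ℝ) : ℂ) * (μ i : ℂ) := by
          exact Finset.sum_congr rfl fun i _ => by rw [hQV i]
      _ = ((∑ i, r i * μ i : ℝ) : ℂ) := by push_cast; ring
  -- combine the traces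
  have hkey : (∑ j, x j * q j) - 1 = ∑ i, r i * μ i := by
    have h : (Q * (X - Y)).trace = (Q * X).trace - (Q * Y).trace := by
      rw [Matrix.mul_sub, Matrix.trace_sub]
    rw [htrQA, htrQX, htrQY] at h
    exact_mod_cast h.symm
  -- Ky Fan bound
  have hky : ∑ j, x j * q j ≤ 1 - s := by
    have h := kyfan hkn x q hxsort hxnn hq0 hq1 hqs
    rw [hks] at h
    exact h
  -- final bound
  have hbound : ∑ i, μ i * (1 - 2 * r i) ≤ ∑ i, |μ i| := by
    refine Finset.sum_le_sum fun i _ => ?_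
    calc μ i * (1 - 2 * r i) ≤ |μ i * (1 - 2 * r i)| := le_abs_self _
      _ = |μ i| * |1 - 2 * r i| := abs_mul _ _
      _ ≤ |μ i| * 1 := by
          refine mul_le_mul_of_nonneg_left ?_ (abs_nonneg _)
          rw [abs_le]
          constructor
          · linarith [hr1 i]
          · linarith [hr0 i]
      _ = |μ i| := mul_one _
  have hexpand : ∑ i, μ i * (1 - 2 * r i) = (∑ i, μ i) - 2 * ∑ i, r i * μ i := by
    rw [Finset.mul_sum, ← Finset.sum_sub_distrib]
    exact Finset.sum_congr rfl fun i _ => by ring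
  rw [htn]
  have h1 : ∑ i, r i * μ i ≤ -s := by linarith
  linarith [hbound, hexpand, hμ0]

lemma attained {k : ℕ} (hk1 : 1 ≤ k) (hkn : k ≤ n)
    (x : Fin n → ℝ) (hxnn : ∀ i, 0 ≤ x i)
    (U : Matrix (Fin n) (Fin n) ℂ) (hU : U ∈ Matrix.unitaryGroup (Fin n) ℂ)
    (X : Matrix (Fin n) (Fin n) ℂ) (hX : IsDensity X)
    (hXU : X = U * Matrix.diagonal (fun i => (x i : ℂ)) * Uᴴ) :
    ∃ Y : Matrix (Fin n) (Fin n) ℂ, IsDensity Y ∧ Y.rank ≤ k ∧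
      traceNorm (X - Y) = 2 * ∑ j ∈ Finset.univ.filter (fun j : Fin n => k ≤ (j : ℕ)), x j := by
  classical
  set s := ∑ j ∈ Finset.univ.filter (fun j : Fin n => k ≤ (j : ℕ)), x j with hs
  have hs0 : 0 ≤ s := Finset.sum_nonneg fun j _ => hxnn j
  have hk0 : (0 : ℝ) < k := by exact_mod_cast hk1
  have hsum1 : ∑ i, x i = 1 := by
    have h := hX.2
    rw [hXU, trace_conj _ _ hU, Matrix.trace_diagonal] at h
    exact_mod_cast h
  have hks : ∑ j ∈ Finset.univ.filter (fun j : Fin n => ((j : ℕ) < k)), x j = 1 - s := by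
    have h := Finset.sum_filter_add_sum_filter_not Finset.univ
      (fun j : Fin n => ((j : ℕ) < k)) x
    have h2 : Finset.univ.filter (fun j : Fin n => ¬ ((j : ℕ) < k))
        = Finset.univ.filter (fun j : Fin n => k ≤ (j : ℕ)) := by
      simp [not_lt]
    rw [h2, hsum1, ← hs] at h
    linarith
  set y : Fin n → ℝ := fun i => if (i : ℕ) < k then x i + s / k else 0 with hydef
  have hy0 : ∀ i, 0 ≤ y i := fun i => by
    rw [hydef]; dsimp only; split
    · have := hxnn i; positivity
    · exact le_refl 0
  set Y : Matrix (Fin n) (Fin n) ℂ := U * Matrix.diagonal (fun i => (y i : ℂ)) * Uᴴ with hYdef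
  have hsumy : ∑ i, y i = 1 := by
    have h1 : ∑ i, y i = ∑ i ∈ Finset.univ.filter (fun i : Fin n => (i : ℕ) < k),
        (x i + s / k) := by
      rw [Finset.sum_filter]
    have h2 : ∑ i ∈ Finset.univ.filter (fun i : Fin n => (i : ℕ) < k), (x i + s / k)
        = (1 - s) + k * (s / k) := by
      rw [Finset.sum_add_distrib, hks, Finset.sum_const, card_filter_lt hkn,
        nsmul_eq_mul]
    rw [h1, h2]
    field_simp
    ring
  have hYdens : IsDensity Y := by
    constructor
    · exact posSemidef_conj_diag U y hy0
    · rw [hYdef, trace_conj _ _ hU, Matrix.trace_diagonal]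
      push_cast
      exact_mod_cast congrArg (fun t : ℝ => (t : ℂ)) hsumy
  have hYrank : Y.rank ≤ k := by
    rw [hYdef, rank_conj _ _ hU, Matrix.rank_diagonal]
    have hsub : (Finset.univ.filter fun i : Fin n => (y i : ℂ) ≠ 0)
        ⊆ Finset.univ.filter fun i : Fin n => (i : ℕ) < k := by
      intro i hi
      rw [Finset.mem_filter] at hi ⊢
      refine ⟨Finset.mem_univ _, ?_⟩
      by_contra h
      apply hi.2
      rw [hydef]
      simp [h]
    calc Fintype.card {i // (fun i => (y i : ℂ)) i ≠ 0}
        = (Finset.univ.filter fun i : Fin n => (y i : ℂ) ≠ 0).card := Fintype.card_subtype _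
      _ ≤ (Finset.univ.filter fun i : Fin n => (i : ℕ) < k).card := Finset.card_le_card hsub
      _ = k := card_filter_lt hkn
  have hXY : X - Y = U * Matrix.diagonal (fun i => ((x i - y i : ℝ) : ℂ)) * Uᴴ := by
    rw [hXU, hYdef, conj_sub, Matrix.diagonal_sub]
    congr 1
    congr 1
    congr 1
    funext i
    push_cast
    ring
  have htn : traceNorm (X - Y) = ∑ i, |x i - y i| := by
    rw [hXY]
    exact traceNorm_conj_diag U hU _
  refine ⟨Y, hYdens, hYrank, ?_⟩
  rw [htn]
  have hsplit := Finset.sum_filter_add_sum_filter_not Finset.univ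
    (fun i : Fin n => (i : ℕ) < k) (fun i => |x i - y i|)
  have hF : ∑ i ∈ Finset.univ.filter (fun i : Fin n => (i : ℕ) < k), |x i - y i| = s := by
    have h1 : ∀ i ∈ Finset.univ.filter (fun i : Fin n => (i : ℕ) < k),
        |x i - y i| = s / k := by
      intro i hi
      rw [Finset.mem_filter] at hi
      rw [hydef]
      dsimp only
      rw [if_pos hi.2]
      rw [show x i - (x i + s / k) = -(s / k) by ring, abs_neg, abs_of_nonneg (by positivity)]
    rw [Finset.sum_congr rfl h1, Finset.sum_const, card_filter_lt hkn, nsmul_eq_mul]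
    field_simp
  have hF' : ∑ i ∈ Finset.univ.filter (fun i : Fin n => ¬ (i : ℕ) < k), |x i - y i| = s := by
    have h1 : ∀ i ∈ Finset.univ.filter (fun i : Fin n => ¬ (i : ℕ) < k),
        |x i - y i| = x i := by
      intro i hi
      rw [Finset.mem_filter] at hi
      rw [hydef]
      dsimp only
      rw [if_neg hi.2, sub_zero, abs_of_nonneg (hxnn i)]
    rw [Finset.sum_congr rfl h1]
    rw [show Finset.univ.filter (fun j : Fin n => ¬ ((j : ℕ) < k))
        = Finset.univ.filter (fun j : Fin n => k ≤ (j : ℕ)) by simp [not_lt]]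
  rw [← hsplit, hF, hF']
  ring

end Aux

theorem stmt_2 (n k : ℕ) (hk1 : 1 ≤ k) (hkn : k ≤ n)
    (X : Matrix (Fin n) (Fin n) ℂ) (hX : IsDensity X)
    (x : Fin n → ℝ) (hxsort : ∀ i j : Fin n, i ≤ j → x j ≤ x i) (hxnn : ∀ i, 0 ≤ x i)
    (U : Matrix (Fin n) (Fin n) ℂ) (hU : U ∈ Matrix.unitaryGroup (Fin n) ℂ)
    (hXU : X = U * Matrix.diagonal (fun i => (x i : ℂ)) * Uᴴ) :
    distToLowRank traceNorm k X
      = 2 * ∑ j ∈ Finset.univ.filter (fun j : Fin n => k ≤ (j : ℕ)), x j := by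
  obtain ⟨Y₀, hY₀d, hY₀r, hY₀tn⟩ := Aux.attained hk1 hkn x hxnn U hU X hX hXU
  have hmem : 2 * ∑ j ∈ Finset.univ.filter (fun j : Fin n => k ≤ (j : ℕ)), x j
      ∈ {t | ∃ Y : Matrix (Fin n) (Fin n) ℂ, IsDensity Y ∧ Y.rank ≤ k ∧ t = traceNorm (X - Y)} :=
    ⟨Y₀, hY₀d, hY₀r, hY₀tn.symm⟩
  have hlb : ∀ t ∈ {t | ∃ Y : Matrix (Fin n) (Fin n) ℂ,
      IsDensity Y ∧ Y.rank ≤ k ∧ t = traceNorm (X - Y)},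
      2 * ∑ j ∈ Finset.univ.filter (fun j : Fin n => k ≤ (j : ℕ)), x j ≤ t := by
    rintro t ⟨Y, hYd, hYr, rfl⟩
    exact Aux.lower_bound hkn x hxsort hxnn U hU X hX hXU Y hYd hYr
  rw [distToLowRank]
  exact le_antisymm (csInf_le ⟨_, hlb⟩ hmem) (le_csInf ⟨_, hmem⟩ hlb)
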